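/- If a group G carries a completely metrizable topology making the multiplication map G × G → G jointly continuous, then inversion g ↦ g⁻¹ is continuous, i.e. G is a topological group. -/

import Mathlib

open Filter Topology

section EllisZelazko

variable {G : Type*} [Group G] [MetricSpace G] [CompleteSpace G] [ContinuousMul G]

private noncomputable def chain (F : (ℕ → ℕ) → ℕ → ℕ) : ℕ → ℕ → ℕ
  | 0 => fun _ => 0
  | (k + 1) => Function.update (chain F k) (k + 1) (F (chain F k) k)

/-- suffix product `y j * y (j+1) * ... * y k` (equal to `1` if `k < j`). -/
private def sfx (y : ℕ → G) (j k : ℕ) : G :=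
  ((List.range (k + 1 - j)).map fun i => y (j + i)).prod

private lemma sfx_congr {y z : ℕ → G} {j k : ℕ} (h : ∀ i ≤ k, y i = z i) :
    sfx y j k = sfx z j k := by
  unfold sfx
  refine congrArg _ (List.map_congr_left fun i hi => ?_)
  rw [List.mem_range] at hi
  exact h (j + i) (by omega)

private lemma sfx_self (y : ℕ → G) (j : ℕ) : sfx y j j = y j := by
  unfold sfx
  rw [show j + 1 - j = 1 by omega, show List.range 1 = [0] from rfl]
  simp

private lemma sfx_succ (y : ℕ → G) {j k : ℕ} (h : j ≤ k + 1) :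
    sfx y j (k + 1) = sfx y j k * y (k + 1) := by
  unfold sfx
  have h1 : k + 1 + 1 - j = (k + 1 - j) + 1 := by omega
  rw [h1, List.range_succ, List.map_append, List.prod_append]
  simp only [List.map_cons, List.map_nil, List.prod_cons, List.prod_nil, mul_one]
  congr 2
  omega

private lemma sfx_split (y : ℕ → G) {k m : ℕ} (h : k ≤ m) :
    sfx y 0 m = sfx y 0 k * sfx y (k + 1) m := by
  unfold sfx
  have h1 : m + 1 - 0 = (k + 1) + (m - k) := by omega
  have h2 : m + 1 - (k + 1) = m - k := by omega
  rw [h1, h2, List.range_add, List.map_append, List.prod_append, List.map_map]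
  simp only [Nat.zero_add, Nat.sub_zero, Function.comp_def]

/-- Construction step: extract a subsequence such that consecutive suffix products
are geometrically close. -/
private lemma construction (u : ℕ → G) (hu : Tendsto u atTop (𝓝 1)) :
    ∃ φ : ℕ → ℕ, StrictMono φ ∧
      ∀ k, ∀ j ≤ k, dist (sfx (u ∘ φ) j (k + 1)) (sfx (u ∘ φ) j k) < (1/2 : ℝ) ^ k := by
  classical
  have step : ∀ (f : ℕ → ℕ) (k : ℕ), ∃ N, f k < N ∧
      ∀ j ∈ Finset.range (k + 1),
        dist (sfx (u ∘ f) j k * u N) (sfx (u ∘ f) j k) < (1/2 : ℝ) ^ k := by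
    intro f k
    have hev : ∀ᶠ n in atTop, ∀ j ∈ Finset.range (k + 1),
        dist (sfx (u ∘ f) j k * u n) (sfx (u ∘ f) j k) < (1/2 : ℝ) ^ k := by
      rw [eventually_all_finset]
      intro j _
      set c := sfx (u ∘ f) j k with hc
      have hcont : Tendsto (fun n => dist (c * u n) c) atTop (𝓝 0) := by
        have h1 : Tendsto (fun g : G => dist (c * g) c) (𝓝 1) (𝓝 (dist (c * 1) c)) :=
          (((continuous_mul_left c).dist continuous_const).tendsto 1)
        simpa [Function.comp_def] using h1.comp hu
      exact hcont.eventually_lt_const (by positivity)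
    exact ((eventually_gt_atTop (f k)).and hev).exists
  choose F hF1 hF2 using step
  set c : ℕ → ℕ → ℕ := chain F with hcdef
  have hcsucc : ∀ k, c (k + 1) = Function.update (c k) (k + 1) (F (c k) k) := fun k => rfl
  refine ⟨fun k => c k k, ?_, ?_⟩
  · apply strictMono_nat_of_lt_succ
    intro k
    have : c (k + 1) (k + 1) = F (c k) k := by
      rw [hcsucc k, Function.update_self]
    rw [this]
    exact hF1 (c k) k
  · intro k j hj
    have hφsucc : c (k + 1) (k + 1) = F (c k) k := by
      rw [hcsucc k, Function.update_self]
    have hcoh : ∀ m i, i ≤ m → c m i = c i i := by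
      intro m
      induction m with
      | zero =>
        intro i hi
        have : i = 0 := by omega
        subst this; rfl
      | succ m ih =>
        intro i hi
        rcases Nat.lt_or_ge i (m + 1) with h | h
        · rw [hcsucc m, Function.update_of_ne (by omega)]
          exact ih i (by omega)
        · have : i = m + 1 := by omega
          subst this; rfl
    have h1 := hF2 (c k) k j (Finset.mem_range.mpr (by omega))
    have h2 : sfx (u ∘ c k) j k = sfx (u ∘ fun m => c m m) j k :=
      sfx_congr fun i hi => by simp only [Function.comp_apply, hcoh k i hi]
    have h3 : u (F (c k) k) = (u ∘ fun m => c m m) (k + 1) := by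
      simp only [Function.comp_apply, hφsucc]
    rw [h2, h3] at h1
    rwa [sfx_succ (u ∘ fun m => c m m) (by omega : j ≤ k + 1)]

/-- Analysis step: if the suffix products of `y` are geometrically Cauchy and `y → 1`,
then `y⁻¹ → 1`. -/
private lemma analysis (y : ℕ → G) (hy1 : Tendsto y atTop (𝓝 1))
    (hdist : ∀ k, ∀ j ≤ k, dist (sfx y j (k + 1)) (sfx y j k) < (1/2 : ℝ) ^ k) :
    Tendsto (fun k => (y k)⁻¹) atTop (𝓝 1) := by
  have hgeom : ∀ j n, dist (sfx y j (j + n)) (sfx y j (j + (n + 1)))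
      ≤ (1/2 : ℝ) ^ j * (1/2 : ℝ) ^ n := by
    intro j n
    have h := hdist (j + n) j (by omega)
    rw [dist_comm] at h
    calc dist (sfx y j (j + n)) (sfx y j (j + (n + 1)))
        = dist (sfx y j (j + n)) (sfx y j ((j + n) + 1)) := by rw [Nat.add_succ]
      _ ≤ (1/2 : ℝ) ^ (j + n) := le_of_lt h
      _ = (1/2 : ℝ) ^ j * (1/2 : ℝ) ^ n := pow_add _ _ _
  have hcauchy : ∀ j, CauchySeq (fun k => sfx y j (j + k)) :=
    fun j => cauchySeq_of_le_geometric (1/2 : ℝ) ((1/2 : ℝ) ^ j) (by norm_num) (hgeom j)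
  choose S hS using fun j => cauchySeq_tendsto_of_complete (hcauchy j)
  have hSdist : ∀ j, dist (y j) (S j) ≤ (1/2 : ℝ) ^ j / (1 - 1/2) := by
    intro j
    have h0 : sfx y j (j + 0) = y j := by rw [Nat.add_zero, sfx_self]
    have := dist_le_of_le_geometric_of_tendsto₀ (1/2 : ℝ) ((1/2 : ℝ) ^ j) (by norm_num)
      (hgeom j) (hS j)
    rwa [h0] at this
  have hS1 : Tendsto S atTop (𝓝 1) := by
    rw [tendsto_iff_dist_tendsto_zero]
    apply squeeze_zero (fun j => dist_nonneg)
      (g := fun j => (1/2 : ℝ) ^ j / (1 - 1/2) + dist (y j) 1)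
    · intro j
      calc dist (S j) 1 ≤ dist (S j) (y j) + dist (y j) 1 := dist_triangle _ _ _
        _ ≤ (1/2 : ℝ) ^ j / (1 - 1/2) + dist (y j) 1 := by
            rw [dist_comm (S j) (y j)]; gcongr; exact hSdist j
    · have h1 : Tendsto (fun j => (1/2 : ℝ) ^ j / (1 - 1/2)) atTop (𝓝 0) := by
        have := tendsto_pow_atTop_nhds_zero_of_lt_one (by norm_num : (0:ℝ) ≤ 1/2)
          (by norm_num : (1/2 : ℝ) < 1)
        simpa using this.div_const (1 - 1/2)
      have h2 : Tendsto (fun j => dist (y j) 1) atTop (𝓝 0) :=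
        tendsto_iff_dist_tendsto_zero.mp hy1
      simpa using h1.add h2
  -- identity: S 0 = sfx y 0 k * S (k+1)
  have hp : ∀ k, S 0 = sfx y 0 k * S (k + 1) := by
    intro k
    have hshift : Tendsto (fun m : ℕ => (k + 1) + m) atTop atTop :=
      tendsto_atTop_mono (fun m => Nat.le_add_left m (k + 1)) tendsto_id
    have hL : Tendsto (fun m => sfx y 0 (0 + ((k + 1) + m))) atTop (𝓝 (S 0)) :=
      (hS 0).comp hshift
    have hR : Tendsto (fun m => sfx y 0 k * sfx y (k + 1) ((k + 1) + m)) atTop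
        (𝓝 (sfx y 0 k * S (k + 1))) :=
      (hS (k + 1)).const_mul _
    refine tendsto_nhds_unique (hL.congr fun m => ?_) hR
    rw [Nat.zero_add]
    exact sfx_split y (by omega)
  -- conclusion
  have hpk : Tendsto (fun k => sfx y 0 k) atTop (𝓝 (S 0)) := by
    have := hS 0
    simpa using this
  have h2 : Tendsto (fun k => (S 0)⁻¹ * sfx y 0 k) atTop (𝓝 ((S 0)⁻¹ * S 0)) :=
    hpk.const_mul _
  have hm2 : Tendsto (fun k : ℕ => k + 2) atTop atTop :=
    tendsto_atTop_mono (fun m => Nat.le_add_right m 2) tendsto_id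
  have h3 : Tendsto (fun k => S (k + 2)) atTop (𝓝 1) := hS1.comp hm2
  have h4 : Tendsto (fun k => S (k + 2) * ((S 0)⁻¹ * sfx y 0 k)) atTop
      (𝓝 (1 * ((S 0)⁻¹ * S 0))) := h3.mul h2
  have h5 : Tendsto (fun k => (y (k + 1))⁻¹) atTop (𝓝 1) := by
    have heq : ∀ k, S (k + 2) * ((S 0)⁻¹ * sfx y 0 k) = (y (k + 1))⁻¹ := by
      intro k
      have e1 : S 0 = sfx y 0 (k + 1) * S (k + 2) := hp (k + 1)
      have e2 : sfx y 0 (k + 1) = sfx y 0 k * y (k + 1) := sfx_succ y (by omega)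
      rw [e2] at e1
      rw [e1]
      group
    have := h4.congr heq
    simpa using this
  exact (tendsto_add_atTop_iff_nat 1).mp h5

private lemma exists_subseq (u : ℕ → G) (hu : Tendsto u atTop (𝓝 1)) :
    ∃ φ : ℕ → ℕ, Tendsto (fun k => (u (φ k))⁻¹) atTop (𝓝 1) := by
  obtain ⟨φ, hmono, hdist⟩ := construction u hu
  exact ⟨φ, analysis (u ∘ φ) (hu.comp hmono.tendsto_atTop) hdist⟩

end EllisZelazko

/-- Ellis–Żelazko: If a group `G` carries a complete metric topology
making multiplication jointly continuous, then inversion is continuous, i.e. `G` is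
a topological group. -/
theorem stmt16 {G : Type*} [Group G] [MetricSpace G] [CompleteSpace G]
    [ContinuousMul G] : IsTopologicalGroup G := by
  have hinv1 : Tendsto (fun x : G => x⁻¹) (𝓝 1) (𝓝 1) := by
    apply tendsto_of_subseq_tendsto
    intro ns hns
    exact exists_subseq ns hns
  have hinv : Continuous (fun x : G => x⁻¹) := by
    rw [continuous_iff_continuousAt]
    intro a
    have h1 : Tendsto (fun x : G => x * a⁻¹) (𝓝 a) (𝓝 1) := by
      have := (continuous_mul_right a⁻¹).tendsto a
      simpa using this
    have h2 : Tendsto (fun x : G => (x * a⁻¹)⁻¹) (𝓝 a) (𝓝 1) := hinv1.comp h1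
    have h3 : Tendsto (fun x : G => a⁻¹ * (x * a⁻¹)⁻¹) (𝓝 a) (𝓝 (a⁻¹ * 1)) :=
      h2.const_mul a⁻¹
    have h4 : (fun x : G => a⁻¹ * (x * a⁻¹)⁻¹) = fun x : G => x⁻¹ := by
      funext x
      group
    have : Tendsto (fun x : G => a⁻¹ * (x * a⁻¹)⁻¹) (𝓝 a) (𝓝 a⁻¹) := by
      simpa using h3
    rw [h4] at this
    exact this
  haveI : ContinuousInv G := ⟨hinv⟩
  constructor
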